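/- Let T \ge 0 be a compact operator on a separable Hilbert space with eigenvalue sequence \mu_n(T) (nonincreasing), and suppose (s-1)\sum_{n\ge0}\mu_n(T)^s \to 0 as s \to 1^+. Then (1/\log N)\sum_{n=0}^{N-1}\mu_n(T) \to 0 as N \to \infty; in particular, for any bounded sequence (f_n) with |f_n| \le M, (1/\log N)\sum_{n=0}^{N-1} f_n \mu_n(T) \to 0. -/

import Mathlib

open Filter

lemma ptwise17 {x t s : ℝ} (hx : 0 ≤ x) (ht : 0 < t) (hs : 1 < s) :
    x ≤ x ^ s * t ^ (1 - s) + t := by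
  rcases le_or_gt x t with h | h
  · have h0 : (0:ℝ) ≤ x ^ s * t ^ (1 - s) :=
      mul_nonneg (Real.rpow_nonneg hx _) (Real.rpow_nonneg ht.le _)
    linarith
  · have hx0 : 0 < x := ht.trans h
    have h1 : x = x ^ s * x ^ (1 - s) := by
      rw [← Real.rpow_add hx0]; simp
    have h2 : x ^ (1 - s) ≤ t ^ (1 - s) :=
      Real.rpow_le_rpow_of_nonpos ht h.le (by linarith)
    calc x = x ^ s * x ^ (1 - s) := h1
    _ ≤ x ^ s * t ^ (1 - s) := mul_le_mul_of_nonneg_left h2 (Real.rpow_nonneg hx0.le s)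
    _ ≤ x ^ s * t ^ (1 - s) + t := le_add_of_nonneg_right ht.le

theorem stmt17 (μ : ℕ → ℝ) (hnonneg : ∀ n, 0 ≤ μ n)
    (hmono : ∀ n, μ (n + 1) ≤ μ n)
    (hsum : ∀ s : ℝ, 1 < s → Summable (fun n : ℕ => (μ n) ^ s))
    (hlim : Tendsto (fun s : ℝ => (s - 1) * ∑' n : ℕ, (μ n) ^ s)
      (nhdsWithin 1 (Set.Ioi 1)) (nhds 0)) :
    Tendsto (fun N : ℕ => (1 / Real.log N) * ∑ n ∈ Finset.range N, μ n)
      atTop (nhds 0) ∧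
    ∀ (M : ℝ) (f : ℕ → ℝ), (∀ n, |f n| ≤ M) →
      Tendsto (fun N : ℕ => (1 / Real.log N) * ∑ n ∈ Finset.range N, f n * μ n)
        atTop (nhds 0) := by
  have hlogtop : Tendsto (fun N : ℕ => Real.log N) atTop atTop :=
    Real.tendsto_log_atTop.comp tendsto_natCast_atTop_atTop
  have hinv : Tendsto (fun N : ℕ => 1 / Real.log N) atTop (nhds 0) := by
    simpa [one_div, Pi.inv_def] using hlogtop.inv_tendsto_atTop
  set φ : ℕ → ℝ := fun N => 1 + 1 / Real.log N with hφdef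
  have hlogpos : ∀ᶠ N : ℕ in atTop, 1 < Real.log N := hlogtop.eventually_gt_atTop 1
  have hφ : Tendsto φ atTop (nhdsWithin 1 (Set.Ioi 1)) := by
    rw [tendsto_nhdsWithin_iff]
    constructor
    · simpa [hφdef, one_div] using ((tendsto_const_nhds : Tendsto (fun _ : ℕ => (1:ℝ)) atTop (nhds 1)).add hinv)
    · filter_upwards [hlogpos] with N hN
      have h0 : 0 < 1 / Real.log N := by positivity
      simpa [hφdef] using h0
  have h1 : Tendsto (fun N : ℕ => (φ N - 1) * ∑' n : ℕ, (μ n) ^ (φ N)) atTop (nhds 0) :=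
    hlim.comp hφ
  have hG : Tendsto (fun N : ℕ =>
      Real.exp 1 * ((φ N - 1) * ∑' n : ℕ, (μ n) ^ (φ N)) + 1 / Real.log N)
      atTop (nhds 0) := by
    have := (h1.const_mul (Real.exp 1)).add hinv
    simpa using this
  have key : ∀ᶠ N : ℕ in atTop,
      (1 / Real.log N) * ∑ n ∈ Finset.range N, μ n ≤
      Real.exp 1 * ((φ N - 1) * ∑' n : ℕ, (μ n) ^ (φ N)) + 1 / Real.log N := by
    filter_upwards [hlogpos, eventually_ge_atTop 1] with N hL hN1
    set L := Real.log N with hLdef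
    have hLpos : 0 < L := lt_trans one_pos hL
    have hNpos : (0:ℝ) < N := by exact_mod_cast hN1
    set s : ℝ := φ N with hsdef
    have hs : 1 < s := by
      have h0 : 0 < 1 / L := by positivity
      simp only [hsdef, hφdef]; linarith
    have hsm1 : s - 1 = 1 / L := by simp [hsdef, hφdef, hLdef]
    have step1 : ∑ n ∈ Finset.range N, μ n ≤
        (1 / N : ℝ) ^ (1 - s) * (∑ n ∈ Finset.range N, (μ n) ^ s) + N * (1 / N) := by
      calc ∑ n ∈ Finset.range N, μ n
          ≤ ∑ n ∈ Finset.range N, ((μ n) ^ s * (1/N:ℝ) ^ (1 - s) + 1/N) :=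
            Finset.sum_le_sum fun n _ => ptwise17 (hnonneg n) (by positivity) hs
        _ = (1 / N : ℝ) ^ (1 - s) * (∑ n ∈ Finset.range N, (μ n) ^ s) + N * (1 / N) := by
            rw [Finset.sum_add_distrib, Finset.sum_const, Finset.card_range,
              ← Finset.sum_mul, mul_comm ((1/N:ℝ) ^ (1-s)), nsmul_eq_mul]
    have hNinv : (N:ℝ) * (1 / N) = 1 := by field_simp
    have hrw : (1 / N : ℝ) ^ (1 - s) = Real.exp 1 := by
      rw [one_div, Real.inv_rpow hNpos.le, ← Real.rpow_neg hNpos.le, neg_sub,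
        Real.rpow_def_of_pos hNpos, hsm1, ← hLdef, mul_one_div, div_self hLpos.ne']
    have hpart : ∑ n ∈ Finset.range N, (μ n) ^ s ≤ ∑' n : ℕ, (μ n) ^ s :=
      Summable.sum_le_tsum _ (fun n _ => Real.rpow_nonneg (hnonneg n) s) (hsum s hs)
    have step2 : ∑ n ∈ Finset.range N, μ n ≤ Real.exp 1 * (∑' n : ℕ, (μ n) ^ s) + 1 := by
      have h3 := mul_le_mul_of_nonneg_left hpart (Real.exp_pos 1).le
      rw [hrw, hNinv] at step1
      linarith
    have hmul := mul_le_mul_of_nonneg_left step2 (show (0:ℝ) ≤ 1 / L by positivity)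
    have heq : (1 / L) * (Real.exp 1 * (∑' n : ℕ, (μ n) ^ s) + 1)
        = Real.exp 1 * ((s - 1) * ∑' n : ℕ, (μ n) ^ s) + 1 / L := by
      rw [hsm1]; ring
    rw [heq] at hmul
    exact hmul
  have part1 : Tendsto (fun N : ℕ => (1 / Real.log N) * ∑ n ∈ Finset.range N, μ n)
      atTop (nhds 0) := by
    refine squeeze_zero' ?_ key hG
    filter_upwards [hlogpos] with N hL
    have : (0:ℝ) ≤ 1 / Real.log N := by positivity
    exact mul_nonneg this (Finset.sum_nonneg fun n _ => hnonneg n)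
  refine ⟨part1, fun M f hf => ?_⟩
  have hM : 0 ≤ M := (abs_nonneg (f 0)).trans (hf 0)
  refine squeeze_zero_norm' ?_ (by simpa only [mul_zero] using part1.const_mul M)
  filter_upwards [hlogpos] with N hL
  have hLnn : (0:ℝ) ≤ 1 / Real.log N := by positivity
  calc ‖(1 / Real.log N) * ∑ n ∈ Finset.range N, f n * μ n‖
      = (1 / Real.log N) * |∑ n ∈ Finset.range N, f n * μ n| := by
        rw [Real.norm_eq_abs, abs_mul, abs_of_nonneg hLnn]
    _ ≤ (1 / Real.log N) * ∑ n ∈ Finset.range N, |f n * μ n| :=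
        mul_le_mul_of_nonneg_left (Finset.abs_sum_le_sum_abs _ _) hLnn
    _ ≤ (1 / Real.log N) * ∑ n ∈ Finset.range N, M * μ n := by
        refine mul_le_mul_of_nonneg_left (Finset.sum_le_sum fun n _ => ?_) hLnn
        rw [abs_mul, abs_of_nonneg (hnonneg n)]
        exact mul_le_mul_of_nonneg_right (hf n) (hnonneg n)
    _ = M * ((1 / Real.log N) * ∑ n ∈ Finset.range N, μ n) := by
        rw [← Finset.mul_sum]; ring
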